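/- arXiv:2205.10847 — 3 statements merged into one kernel-verified Lean document; each statement's English description precedes it below -/
import Mathlib

section
/- If Φ is a bistochastic channel on a finite-dimensional Hilbert space (both Φ and its Heisenberg dual Φ* are trace-preserving and unital completely positive maps) and Φ*(H) = H for a self-adjoint operator H, then Φ*(H^k) = H^k for all natural numbers k. -/
open Matrix Kronecker ComplexOrder

/-- Completely positive map, via Kraus representation (equivalent in finite dimension). -/
def IsCP {d : Type*} [Fintype d] [DecidableEq d]
    (Φ : Matrix d d ℂ → Matrix d d ℂ) : Prop :=
  ∃ (m : ℕ) (K : Fin m → Matrix d d ℂ), ∀ A, Φ A = ∑ i, K i * A * (K i)ᴴ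

/-- Trace-preserving map. -/
def IsTP {d : Type*} [Fintype d] [DecidableEq d]
    (Φ : Matrix d d ℂ → Matrix d d ℂ) : Prop :=
  ∀ A, (Φ A).trace = A.trace

/-- Unital map. -/
def IsUnital {d : Type*} [Fintype d] [DecidableEq d]
    (Φ : Matrix d d ℂ → Matrix d d ℂ) : Prop :=
  Φ 1 = 1

/-- `Φd` is the Heisenberg dual of `Φ`, defined by trace duality. -/
def IsDual {d : Type*} [Fintype d] [DecidableEq d]
    (Φ Φd : Matrix d d ℂ → Matrix d d ℂ) : Prop :=
  ∀ A B, (A * Φ B).trace = (Φd A * B).trace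

lemma trace_mul_conjT {p : ℕ} (M : Matrix (Fin p) (Fin p) ℂ) :
    (M * Mᴴ).trace = ((∑ i, ∑ j, Complex.normSq (M i j) : ℝ) : ℂ) := by
  simp only [Matrix.trace, Matrix.diag, Matrix.mul_apply, Matrix.conjTranspose_apply]
  push_cast
  refine Finset.sum_congr rfl fun i _ => Finset.sum_congr rfl fun j _ => ?_
  rw [show star (M i j) = (starRingEnd ℂ) (M i j) from rfl, Complex.mul_conj]

lemma eq_zero_of_trace_mul_conjT {p : ℕ} (M : Matrix (Fin p) (Fin p) ℂ)
    (h : (M * Mᴴ).trace = 0) : M = 0 := by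
  rw [trace_mul_conjT, Complex.ofReal_eq_zero] at h
  ext i j
  have h1 := (Finset.sum_eq_zero_iff_of_nonneg (fun i _ =>
    Finset.sum_nonneg (fun j _ => Complex.normSq_nonneg (M i j)))).mp h i (Finset.mem_univ i)
  have h2 := (Finset.sum_eq_zero_iff_of_nonneg (fun j _ =>
    Complex.normSq_nonneg (M i j))).mp h1 j (Finset.mem_univ j)
  simpa using Complex.normSq_eq_zero.mp h2

/-- If `Φ` is a bistochastic channel (both `Φ` and its Heisenberg dual `Φd`
are trace-preserving and unital completely positive maps) on a finite-dimensional space and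
`Φd H = H` for a self-adjoint `H`, then `Φd (H^k) = H^k` for all `k : ℕ`. -/
theorem thermal_dual_fixes_all_powers {n : ℕ}
    (Φ Φd : Matrix (Fin n) (Fin n) ℂ → Matrix (Fin n) (Fin n) ℂ)
    (hCP : IsCP Φ) (hTP : IsTP Φ) (hU : IsUnital Φ)
    (hdCP : IsCP Φd) (hdTP : IsTP Φd) (hdU : IsUnital Φd)
    (hDual : IsDual Φ Φd)
    (H : Matrix (Fin n) (Fin n) ℂ) (hH : H.IsHermitian)
    (hfix : Φd H = H) :
    ∀ k : ℕ, Φd (H ^ k) = H ^ k := by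
  obtain ⟨m, L, hK⟩ := hdCP
  have hHH : Hᴴ = H := hH
  have hone : ∑ i, L i * (L i)ᴴ = 1 := by
    have := hK 1
    rw [hdU] at this
    simpa using this.symm
  -- the commutator defect
  set M : Fin m → Matrix (Fin n) (Fin n) ℂ := fun i => L i * H - H * L i with hM
  have hsum : ∑ i, M i * (M i)ᴴ = Φd (H ^ 2) - H ^ 2 := by
    have expand : ∀ i, M i * (M i)ᴴ =
        L i * H ^ 2 * (L i)ᴴ - (L i * H * (L i)ᴴ) * H
          - H * (L i * H * (L i)ᴴ) + H * (L i * (L i)ᴴ) * H := by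
      intro i
      simp only [hM, Matrix.conjTranspose_sub, Matrix.conjTranspose_mul, hHH]
      noncomm_ring
    rw [Finset.sum_congr rfl fun i _ => expand i]
    simp only [Finset.sum_add_distrib, Finset.sum_sub_distrib, ← Finset.sum_mul,
      ← Finset.mul_sum, ← hK, hfix]
    rw [hone]
    noncomm_ring
  have htr : (∑ i, M i * (M i)ᴴ).trace = 0 := by
    rw [hsum, Matrix.trace_sub, hdTP, sub_self]
  have hMzero : ∀ i, M i = 0 := by
    rw [Matrix.trace_sum] at htr
    have hre : ∑ i, (∑ a, ∑ b, Complex.normSq (M i a b) : ℝ) = 0 := by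
      have : ∑ i, ((∑ a, ∑ b, Complex.normSq (M i a b) : ℝ) : ℂ) = 0 := by
        rw [← htr]
        exact Finset.sum_congr rfl fun i _ => (trace_mul_conjT (M i)).symm
      exact_mod_cast this
    intro i
    have := (Finset.sum_eq_zero_iff_of_nonneg (fun i _ =>
      Finset.sum_nonneg fun a _ => Finset.sum_nonneg fun b _ =>
        Complex.normSq_nonneg (M i a b))).mp hre i (Finset.mem_univ i)
    exact eq_zero_of_trace_mul_conjT (M i)
      ((trace_mul_conjT (M i)).trans (by rw [this, Complex.ofReal_zero]))
  have hcomm : ∀ i, Commute (L i) H := fun i => sub_eq_zero.mp (hMzero i)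
  intro k
  rw [hK]
  calc ∑ i, L i * H ^ k * (L i)ᴴ = ∑ i, H ^ k * (L i * (L i)ᴴ) := by
        refine Finset.sum_congr rfl fun i _ => ?_
        rw [((hcomm i).pow_right k).eq, mul_assoc]
    _ = H ^ k := by rw [← Finset.mul_sum, hone, mul_one]
end

section
/- If Φ is a bistochastic channel on a finite-dimensional Hilbert space with Φ*(H) = H for a self-adjoint operator H, then Φ is time-translation covariant with respect to H: Φ(e^{-itH} ρ e^{itH}) = e^{-itH} Φ(ρ) e^{itH} for all operators ρ and all real t. -/
open Matrix Kronecker ComplexOrder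

/-- The unitary one-parameter group `e^{-itH}`. -/
noncomputable def timeEv {d : Type*} [Fintype d] [DecidableEq d]
    (H : Matrix d d ℂ) (t : ℝ) : Matrix d d ℂ :=
  NormedSpace.exp ((-(Complex.I * t)) • H)

/-- The inverse unitary `e^{itH}`. -/
noncomputable def timeEvInv {d : Type*} [Fintype d] [DecidableEq d]
    (H : Matrix d d ℂ) (t : ℝ) : Matrix d d ℂ :=
  NormedSpace.exp ((Complex.I * t) • H)


lemma trace_ext' {n : ℕ} {M N : Matrix (Fin n) (Fin n) ℂ}
    (h : ∀ A : Matrix (Fin n) (Fin n) ℂ, (A * M).trace = (A * N).trace) : M = N := by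
  ext i j
  have := h (single j i 1)
  simpa [Matrix.trace, Matrix.diag, Matrix.mul_apply, Matrix.single, Finset.sum_ite_eq,
    Matrix.of_apply, ite_and] using this

lemma commute_exp' {n : ℕ} (A B : Matrix (Fin n) (Fin n) ℂ) (h : Commute A B) (c : ℂ) :
    Commute (NormedSpace.exp (c • A)) B := by
  letI : SeminormedRing (Matrix (Fin n) (Fin n) ℂ) := Matrix.linftyOpSemiNormedRing
  letI : NormedRing (Matrix (Fin n) (Fin n) ℂ) := Matrix.linftyOpNormedRing
  letI : NormedAlgebra ℂ (Matrix (Fin n) (Fin n) ℂ) := Matrix.linftyOpNormedAlgebra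
  exact (h.smul_left c).exp_left


/-- A bistochastic channel whose dual fixes a self-adjoint `H` is
time-translation covariant: `Φ(e^{-itH} ρ e^{itH}) = e^{-itH} Φ(ρ) e^{itH}`. -/
theorem bistochastic_time_translation_covariant {n : ℕ}
    (Φ Φd : Matrix (Fin n) (Fin n) ℂ → Matrix (Fin n) (Fin n) ℂ)
    (hCP : IsCP Φ) (hTP : IsTP Φ) (hU : IsUnital Φ)
    (hdCP : IsCP Φd) (hdTP : IsTP Φd) (hdU : IsUnital Φd)
    (hDual : IsDual Φ Φd)
    (H : Matrix (Fin n) (Fin n) ℂ) (hH : H.IsHermitian)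
    (hfix : Φd H = H) :
    ∀ (ρ : Matrix (Fin n) (Fin n) ℂ) (t : ℝ),
      Φ (timeEv H t * ρ * timeEvInv H t) = timeEv H t * Φ ρ * timeEvInv H t := by
  simp only [timeEv, timeEvInv]
  obtain ⟨m, L, hL⟩ := hdCP
  -- Kraus form of Φ
  have hΦ : ∀ B, Φ B = ∑ i, (L i)ᴴ * B * L i := by
    intro B
    refine trace_ext' (fun A => ?_)
    rw [hDual A B, hL A, Finset.sum_mul, Matrix.trace_sum]
    rw [Finset.mul_sum, Matrix.trace_sum]
    refine Finset.sum_congr rfl fun i _ => ?_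
    rw [show L i * A * (L i)ᴴ * B = (L i * A) * ((L i)ᴴ * B) from mul_assoc _ _ _,
      Matrix.trace_mul_comm, show (L i)ᴴ * B * (L i * A) = ((L i)ᴴ * B * L i) * A from
        (mul_assoc _ _ _).symm, Matrix.trace_mul_comm]
  -- unitality: ∑ L Lᴴ = 1
  have hone : ∑ i, L i * (L i)ᴴ = 1 := by
    have := hL 1
    rw [hdU] at this
    simpa [mul_one] using this.symm
  -- H commutes with all Kraus operators
  set X : Fin m → Matrix (Fin n) (Fin n) ℂ := fun i => H * L i - L i * H with hX
  have hsum : ∑ i, X i * (X i)ᴴ = Φd (H * H) - H * H := by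
    have expand : ∀ i, X i * (X i)ᴴ
        = H * (L i * (L i)ᴴ) * H - H * (L i * H * (L i)ᴴ)
          - (L i * H * (L i)ᴴ) * H + L i * (H * H) * (L i)ᴴ := by
      intro i
      simp only [hX, conjTranspose_sub, conjTranspose_mul, hH.eq]
      noncomm_ring
    rw [Finset.sum_congr rfl fun i _ => expand i]
    simp only [Finset.sum_add_distrib, Finset.sum_sub_distrib, ← Finset.mul_sum,
      ← Finset.sum_mul, ← hL, hone, hfix]
    noncomm_ring
  have htr : ∑ i, (X i * (X i)ᴴ).trace = 0 := by
    rw [← Matrix.trace_sum, hsum, Matrix.trace_sub, hdTP, sub_self]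
  have hXzero : ∀ i, X i = 0 := by
    have h2 : ∑ i, ∑ a, ∑ k, Complex.normSq (X i a k) = 0 := by
      have : ((∑ i, ∑ a, ∑ k, Complex.normSq (X i a k) : ℝ) : ℂ) = 0 := by
        push_cast
        rw [← htr]
        refine Finset.sum_congr rfl fun i _ => ?_
        rw [Matrix.trace]
        simp only [Matrix.diag, Matrix.mul_apply, Matrix.conjTranspose_apply]
        refine Finset.sum_congr rfl fun a _ => Finset.sum_congr rfl fun k _ => ?_
        simp [Complex.star_def, ← Complex.mul_conj]
      exact_mod_cast this
    intro i
    ext a k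
    have := (Finset.sum_eq_zero_iff_of_nonneg (fun i _ =>
      Finset.sum_nonneg (fun a _ => Finset.sum_nonneg (fun k _ => Complex.normSq_nonneg _)))).mp h2
      i (Finset.mem_univ i)
    have := (Finset.sum_eq_zero_iff_of_nonneg (fun a _ =>
      Finset.sum_nonneg (fun k _ => Complex.normSq_nonneg _))).mp this a (Finset.mem_univ a)
    have := (Finset.sum_eq_zero_iff_of_nonneg (fun k _ => Complex.normSq_nonneg _)).mp this
      k (Finset.mem_univ k)
    simpa [Complex.normSq_eq_zero] using this
  have hcomm : ∀ i, Commute H (L i) := fun i => by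
    have := hXzero i
    rw [hX] at this
    exact sub_eq_zero.mp (by simpa using this)
  have hcommH : ∀ i, Commute H ((L i)ᴴ) := fun i => by
    have := congrArg conjTranspose (hcomm i).eq
    simpa [conjTranspose_mul, hH.eq, Commute, SemiconjBy, eq_comm] using this
  intro ρ t
  rw [hΦ, hΦ, Finset.mul_sum, Finset.sum_mul]
  refine Finset.sum_congr rfl fun i _ => ?_
  have h1 : Commute (NormedSpace.exp ((-(Complex.I * t)) • H)) ((L i)ᴴ) :=
    commute_exp' H _ (hcommH i) _
  have h2 : Commute (NormedSpace.exp ((Complex.I * t) • H)) (L i) :=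
    commute_exp' H _ (hcomm i) _
  calc (L i)ᴴ * (NormedSpace.exp ((-(Complex.I * t)) • H) * ρ
          * NormedSpace.exp ((Complex.I * t) • H)) * L i
      = ((L i)ᴴ * NormedSpace.exp ((-(Complex.I * t)) • H)) * ρ
          * (NormedSpace.exp ((Complex.I * t) • H) * L i) := by noncomm_ring
    _ = (NormedSpace.exp ((-(Complex.I * t)) • H) * (L i)ᴴ) * ρ
          * (L i * NormedSpace.exp ((Complex.I * t) • H)) := by rw [h1.eq, h2.eq]
    _ = NormedSpace.exp ((-(Complex.I * t)) • H) * ((L i)ᴴ * ρ * L i)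
          * NormedSpace.exp ((Complex.I * t) • H) := by noncomm_ring
end

section
/- If Φ is a bistochastic channel on a finite-dimensional Hilbert space with Φ*(H) = H for a self-adjoint operator H with spectral decomposition H = Σ_n λ_n P_n, then every state of the form ρ = Σ_n p_n P_n (a mixture of the spectral projections of H) is a fixed point: Φ(ρ) = ρ. -/
open Matrix Kronecker ComplexOrder

lemma trace_ctm {d : Type*} [Fintype d] (X : Matrix d d ℂ) :
    (Xᴴ * X).trace = ((∑ i, ∑ j, Complex.normSq (X i j) : ℝ) : ℂ) := by
  simp only [Matrix.trace, Matrix.diag, Matrix.mul_apply, Matrix.conjTranspose_apply]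
  push_cast
  rw [Finset.sum_comm]
  congr 1; ext i; congr 1; ext j
  rw [Complex.normSq_eq_conj_mul_self]; rfl

lemma ctm_zero {d : Type*} [Fintype d] {X : Matrix d d ℂ}
    (h : (∑ i, ∑ j, Complex.normSq (X i j)) = 0) : X = 0 := by
  ext i j
  have h1 : ∀ i ∈ Finset.univ, (0:ℝ) ≤ ∑ j, Complex.normSq (X i j) :=
    fun i _ => Finset.sum_nonneg fun j _ => Complex.normSq_nonneg _
  have h2 := (Finset.sum_eq_zero_iff_of_nonneg h1).mp h i (Finset.mem_univ i)
  have h3 := (Finset.sum_eq_zero_iff_of_nonneg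
    (fun j _ => Complex.normSq_nonneg (X i j))).mp h2 j (Finset.mem_univ j)
  simpa [Complex.normSq_eq_zero] using h3

theorem test {n M : ℕ}
    (Φ Φd : Matrix (Fin n) (Fin n) ℂ → Matrix (Fin n) (Fin n) ℂ)
    (hCP : IsCP Φ) (hTP : IsTP Φ) (hU : IsUnital Φ)
    (hdCP : IsCP Φd) (hdTP : IsTP Φd) (hdU : IsUnital Φd)
    (hDual : IsDual Φ Φd)
    (H : Matrix (Fin n) (Fin n) ℂ) (hH : H.IsHermitian)
    (lam : Fin M → ℝ) (hlam : Function.Injective lam)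
    (P : Fin M → Matrix (Fin n) (Fin n) ℂ)
    (hPherm : ∀ m, (P m).IsHermitian)
    (hPorth : ∀ m m', P m * P m' = if m = m' then P m else 0)
    (hPsum : ∑ m, P m = 1)
    (hspec : H = ∑ m, (lam m : ℂ) • P m)
    (hfix : Φd H = H)
    (p : Fin M → ℝ) (hp : ∀ m, 0 ≤ p m)
    (hnorm : ∑ m, p m * ((P m).trace).re = 1)
    (ρ : Matrix (Fin n) (Fin n) ℂ) (hρ : ρ = ∑ m, (p m : ℂ) • P m) :
    Φ ρ = ρ := by
  classical
  obtain ⟨k, K, hK⟩ := hCP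
  have hK1 : ∑ i, K i * (K i)ᴴ = 1 := by
    have h := hK 1
    rw [hU] at h
    simpa [mul_one] using h.symm
  set C := Φ H with hCdef
  have hC : C = ∑ i, K i * H * (K i)ᴴ := hK H
  have hCherm : Cᴴ = C := by
    rw [hC, conjTranspose_sum]
    refine Finset.sum_congr rfl fun i _ => ?_
    simp [conjTranspose_mul, hH.eq, mul_assoc]
  -- key operator identity
  set D : Fin k → Matrix (Fin n) (Fin n) ℂ :=
    fun i => H * (K i)ᴴ - (K i)ᴴ * C with hD
  have key : ∑ i, (D i)ᴴ * D i = Φ (H*H) - C*C := by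
    have expand : ∀ i, (D i)ᴴ * D i
        = K i * (H*H) * (K i)ᴴ - (K i * H * (K i)ᴴ) * C
          - C * (K i * H * (K i)ᴴ) + C * (K i * (K i)ᴴ) * C := by
      intro i
      simp only [hD, conjTranspose_sub, conjTranspose_mul,
        conjTranspose_conjTranspose, hH.eq, hCherm]
      noncomm_ring
    calc ∑ i, (D i)ᴴ * D i
        = (∑ i, K i * (H*H) * (K i)ᴴ) - (∑ i, K i * H * (K i)ᴴ) * C
          - C * (∑ i, K i * H * (K i)ᴴ) + C * (∑ i, K i * (K i)ᴴ) * C := by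
          rw [Finset.sum_congr rfl fun i _ => expand i]
          simp [Finset.sum_sub_distrib, Finset.sum_add_distrib,
            Finset.sum_mul, Finset.mul_sum]
      _ = Φ (H*H) - C*C := by
          rw [← hK (H*H), ← hC, hK1, mul_one]
          noncomm_ring
  have keyE : (C - H)ᴴ * (C - H) = C*C - C*H - H*C + H*H := by
    simp only [conjTranspose_sub, hCherm, hH.eq]
    noncomm_ring
  -- trace facts
  have tφ : (Φ (H*H)).trace = (H*H).trace := hTP _
  have tdual : (H * C).trace = (H*H).trace := by
    have h := hDual H H
    rw [hfix] at h
    exact h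
  have tCH : (C * H).trace = (H*H).trace := by
    rw [trace_mul_comm]; exact tdual
  have t0 : (∑ i, ((D i)ᴴ * D i).trace) + ((C - H)ᴴ * (C - H)).trace = 0 := by
    rw [← trace_sum, key, keyE]
    simp only [trace_sub, trace_add]
    rw [tφ, tdual, tCH]
    ring
  -- move to reals
  set F : Matrix (Fin n) (Fin n) ℂ → ℝ :=
    fun X => ∑ i, ∑ j, Complex.normSq (X i j) with hF
  have t0' : (∑ i, F (D i)) + F (C - H) = 0 := by
    have := t0
    rw [Finset.sum_congr rfl (fun i _ => trace_ctm (D i)), trace_ctm (C - H),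
      ← Complex.ofReal_sum, ← Complex.ofReal_add] at this
    exact_mod_cast this
  have hFnn : ∀ X : Matrix (Fin n) (Fin n) ℂ, 0 ≤ F X :=
    fun X => Finset.sum_nonneg fun i _ => Finset.sum_nonneg fun j _ => Complex.normSq_nonneg _
  have hFDsum : ∑ i, F (D i) = 0 := by
    have := hFnn (C - H)
    have h2 : (0:ℝ) ≤ ∑ i, F (D i) := Finset.sum_nonneg fun i _ => hFnn _
    linarith
  have hFE : F (C - H) = 0 := by
    have h2 : (0:ℝ) ≤ ∑ i, F (D i) := Finset.sum_nonneg fun i _ => hFnn _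
    linarith
  have hCH : C = H := by
    have := ctm_zero hFE
    have := sub_eq_zero.mp this
    exact this
  have hDzero : ∀ i, D i = 0 := fun i =>
    ctm_zero ((Finset.sum_eq_zero_iff_of_nonneg (fun i _ => hFnn (D i))).mp hFDsum i (Finset.mem_univ i))
  -- K i commutes with H
  have hKH : ∀ i, K i * H = H * K i := by
    intro i
    have h := hDzero i
    rw [hD] at h
    have h' : H * (K i)ᴴ = (K i)ᴴ * H := by
      have := sub_eq_zero.mp h
      rwa [hCH] at this
    have h2 := congrArg conjTranspose h'
    simp only [conjTranspose_mul, conjTranspose_conjTranspose, hH.eq] at h2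
    exact h2
  -- K i commutes with each P b
  have hHP : ∀ b, H * P b = (lam b : ℂ) • P b := by
    intro b
    rw [hspec, Finset.sum_mul]
    rw [Finset.sum_congr rfl (fun m _ => by rw [smul_mul_assoc, hPorth m b])]
    simp
  have hPH : ∀ a, P a * H = (lam a : ℂ) • P a := by
    intro a
    rw [hspec, Finset.mul_sum]
    rw [Finset.sum_congr rfl (fun m _ => by rw [mul_smul_comm, hPorth a m])]
    simp [Finset.sum_ite_eq]
  have hzero : ∀ i a b, a ≠ b → P a * K i * P b = 0 := by
    intro i a b hab
    have h1 : (lam a : ℂ) • (P a * K i * P b) = (lam b : ℂ) • (P a * K i * P b) := by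
      calc (lam a : ℂ) • (P a * K i * P b) = ((lam a : ℂ) • P a) * K i * P b := by
            rw [smul_mul_assoc, smul_mul_assoc]
        _ = P a * H * K i * P b := by rw [hPH]
        _ = P a * (K i * H) * P b := by rw [mul_assoc (P a), ← hKH i, ← mul_assoc]
        _ = P a * K i * (H * P b) := by noncomm_ring
        _ = (lam b : ℂ) • (P a * K i * P b) := by rw [hHP, mul_smul_comm]
    have h2 : ((lam a : ℂ) - lam b) • (P a * K i * P b) = 0 := by
      rw [sub_smul, h1, sub_self]
    have h3 : ((lam a : ℂ) - lam b) ≠ 0 := by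
      intro h
      apply hab
      apply hlam
      have := sub_eq_zero.mp h
      exact_mod_cast this
    exact (smul_eq_zero.mp h2).resolve_left h3
  have commP : ∀ i b, K i * P b = P b * K i := by
    intro i b
    have l1 : K i * P b = P b * K i * P b := by
      calc K i * P b = 1 * (K i * P b) := (one_mul _).symm
        _ = ∑ a, P a * K i * P b := by rw [← hPsum, Finset.sum_mul]; simp [mul_assoc]
        _ = P b * K i * P b := by
            rw [Finset.sum_eq_single b (fun a _ ha => hzero i a b ha) (by simp)]
    have l2 : P b * K i = P b * K i * P b := by
      calc P b * K i = (P b * K i) * 1 := (mul_one _).symm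
        _ = ∑ a, P b * K i * P a := by rw [← hPsum, Finset.mul_sum]
        _ = P b * K i * P b := by
            rw [Finset.sum_eq_single b (fun a _ ha => hzero i b a (Ne.symm ha)) (by simp)]
    rw [l1, ← l2]
  -- conclude
  have hcomm : ∀ i, K i * ρ = ρ * K i := by
    intro i
    rw [hρ, Finset.mul_sum, Finset.sum_mul]
    exact Finset.sum_congr rfl fun m _ => by
      rw [mul_smul_comm, smul_mul_assoc, commP]
  rw [hK ρ]
  calc ∑ i, K i * ρ * (K i)ᴴ = ∑ i, ρ * (K i * (K i)ᴴ) := by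
        refine Finset.sum_congr rfl fun i _ => ?_
        rw [hcomm i, mul_assoc]
    _ = ρ := by rw [← Finset.mul_sum, hK1, mul_one]
/-- If `Φ` is a bistochastic channel with `Φd H = H` for a self-adjoint `H`
with spectral decomposition `H = Σ_m λ_m P_m` (distinct real eigenvalues `λ_m`, orthogonal
spectral projections `P_m` summing to the identity), then every state of the form
`ρ = Σ_m p_m P_m` with `p_m ≥ 0` and `Σ_m p_m tr[P_m] = 1` is a fixed point: `Φ ρ = ρ`. -/
theorem bistochastic_fixes_spectral_mixtures {n M : ℕ}
    (Φ Φd : Matrix (Fin n) (Fin n) ℂ → Matrix (Fin n) (Fin n) ℂ)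
    (hCP : IsCP Φ) (hTP : IsTP Φ) (hU : IsUnital Φ)
    (hdCP : IsCP Φd) (hdTP : IsTP Φd) (hdU : IsUnital Φd)
    (hDual : IsDual Φ Φd)
    (H : Matrix (Fin n) (Fin n) ℂ) (hH : H.IsHermitian)
    (lam : Fin M → ℝ) (hlam : Function.Injective lam)
    (P : Fin M → Matrix (Fin n) (Fin n) ℂ)
    (hPherm : ∀ m, (P m).IsHermitian)
    (hPorth : ∀ m m', P m * P m' = if m = m' then P m else 0)
    (hPsum : ∑ m, P m = 1)
    (hspec : H = ∑ m, (lam m : ℂ) • P m)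
    (hfix : Φd H = H)
    (p : Fin M → ℝ) (hp : ∀ m, 0 ≤ p m)
    (hnorm : ∑ m, p m * ((P m).trace).re = 1)
    (ρ : Matrix (Fin n) (Fin n) ℂ) (hρ : ρ = ∑ m, (p m : ℂ) • P m) :
    Φ ρ = ρ := by
  classical
  obtain ⟨k, K, hK⟩ := hCP
  have hK1 : ∑ i, K i * (K i)ᴴ = 1 := by
    have h := hK 1
    rw [hU] at h
    simpa [mul_one] using h.symm
  set C := Φ H with hCdef
  have hC : C = ∑ i, K i * H * (K i)ᴴ := hK H
  have hCherm : Cᴴ = C := by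
    rw [hC, conjTranspose_sum]
    refine Finset.sum_congr rfl fun i _ => ?_
    simp [conjTranspose_mul, hH.eq, mul_assoc]
  -- key operator identity
  set D : Fin k → Matrix (Fin n) (Fin n) ℂ :=
    fun i => H * (K i)ᴴ - (K i)ᴴ * C with hD
  have key : ∑ i, (D i)ᴴ * D i = Φ (H*H) - C*C := by
    have expand : ∀ i, (D i)ᴴ * D i
        = K i * (H*H) * (K i)ᴴ - (K i * H * (K i)ᴴ) * C
          - C * (K i * H * (K i)ᴴ) + C * (K i * (K i)ᴴ) * C := by
      intro i
      simp only [hD, conjTranspose_sub, conjTranspose_mul,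
        conjTranspose_conjTranspose, hH.eq, hCherm]
      noncomm_ring
    calc ∑ i, (D i)ᴴ * D i
        = (∑ i, K i * (H*H) * (K i)ᴴ) - (∑ i, K i * H * (K i)ᴴ) * C
          - C * (∑ i, K i * H * (K i)ᴴ) + C * (∑ i, K i * (K i)ᴴ) * C := by
          rw [Finset.sum_congr rfl fun i _ => expand i]
          simp [Finset.sum_sub_distrib, Finset.sum_add_distrib,
            Finset.sum_mul, Finset.mul_sum]
      _ = Φ (H*H) - C*C := by
          rw [← hK (H*H), ← hC, hK1, mul_one]
          noncomm_ring
  have keyE : (C - H)ᴴ * (C - H) = C*C - C*H - H*C + H*H := by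
    simp only [conjTranspose_sub, hCherm, hH.eq]
    noncomm_ring
  -- trace facts
  have tφ : (Φ (H*H)).trace = (H*H).trace := hTP _
  have tdual : (H * C).trace = (H*H).trace := by
    have h := hDual H H
    rw [hfix] at h
    exact h
  have tCH : (C * H).trace = (H*H).trace := by
    rw [trace_mul_comm]; exact tdual
  have t0 : (∑ i, ((D i)ᴴ * D i).trace) + ((C - H)ᴴ * (C - H)).trace = 0 := by
    rw [← trace_sum, key, keyE]
    simp only [trace_sub, trace_add]
    rw [tφ, tdual, tCH]
    ring
  -- move to reals
  set F : Matrix (Fin n) (Fin n) ℂ → ℝ :=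
    fun X => ∑ i, ∑ j, Complex.normSq (X i j) with hF
  have t0' : (∑ i, F (D i)) + F (C - H) = 0 := by
    have := t0
    rw [Finset.sum_congr rfl (fun i _ => trace_ctm (D i)), trace_ctm (C - H),
      ← Complex.ofReal_sum, ← Complex.ofReal_add] at this
    exact_mod_cast this
  have hFnn : ∀ X : Matrix (Fin n) (Fin n) ℂ, 0 ≤ F X :=
    fun X => Finset.sum_nonneg fun i _ => Finset.sum_nonneg fun j _ => Complex.normSq_nonneg _
  have hFDsum : ∑ i, F (D i) = 0 := by
    have := hFnn (C - H)
    have h2 : (0:ℝ) ≤ ∑ i, F (D i) := Finset.sum_nonneg fun i _ => hFnn _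
    linarith
  have hFE : F (C - H) = 0 := by
    have h2 : (0:ℝ) ≤ ∑ i, F (D i) := Finset.sum_nonneg fun i _ => hFnn _
    linarith
  have hCH : C = H := by
    have := ctm_zero hFE
    have := sub_eq_zero.mp this
    exact this
  have hDzero : ∀ i, D i = 0 := fun i =>
    ctm_zero ((Finset.sum_eq_zero_iff_of_nonneg (fun i _ => hFnn (D i))).mp hFDsum i (Finset.mem_univ i))
  -- K i commutes with H
  have hKH : ∀ i, K i * H = H * K i := by
    intro i
    have h := hDzero i
    rw [hD] at h
    have h' : H * (K i)ᴴ = (K i)ᴴ * H := by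
      have := sub_eq_zero.mp h
      rwa [hCH] at this
    have h2 := congrArg conjTranspose h'
    simp only [conjTranspose_mul, conjTranspose_conjTranspose, hH.eq] at h2
    exact h2
  -- K i commutes with each P b
  have hHP : ∀ b, H * P b = (lam b : ℂ) • P b := by
    intro b
    rw [hspec, Finset.sum_mul]
    rw [Finset.sum_congr rfl (fun m _ => by rw [smul_mul_assoc, hPorth m b])]
    simp
  have hPH : ∀ a, P a * H = (lam a : ℂ) • P a := by
    intro a
    rw [hspec, Finset.mul_sum]
    rw [Finset.sum_congr rfl (fun m _ => by rw [mul_smul_comm, hPorth a m])]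
    simp [Finset.sum_ite_eq]
  have hzero : ∀ i a b, a ≠ b → P a * K i * P b = 0 := by
    intro i a b hab
    have h1 : (lam a : ℂ) • (P a * K i * P b) = (lam b : ℂ) • (P a * K i * P b) := by
      calc (lam a : ℂ) • (P a * K i * P b) = ((lam a : ℂ) • P a) * K i * P b := by
            rw [smul_mul_assoc, smul_mul_assoc]
        _ = P a * H * K i * P b := by rw [hPH]
        _ = P a * (K i * H) * P b := by rw [mul_assoc (P a), ← hKH i, ← mul_assoc]
        _ = P a * K i * (H * P b) := by noncomm_ring
        _ = (lam b : ℂ) • (P a * K i * P b) := by rw [hHP, mul_smul_comm]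
    have h2 : ((lam a : ℂ) - lam b) • (P a * K i * P b) = 0 := by
      rw [sub_smul, h1, sub_self]
    have h3 : ((lam a : ℂ) - lam b) ≠ 0 := by
      intro h
      apply hab
      apply hlam
      have := sub_eq_zero.mp h
      exact_mod_cast this
    exact (smul_eq_zero.mp h2).resolve_left h3
  have commP : ∀ i b, K i * P b = P b * K i := by
    intro i b
    have l1 : K i * P b = P b * K i * P b := by
      calc K i * P b = 1 * (K i * P b) := (one_mul _).symm
        _ = ∑ a, P a * K i * P b := by rw [← hPsum, Finset.sum_mul]; simp [mul_assoc]
        _ = P b * K i * P b := by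
            rw [Finset.sum_eq_single b (fun a _ ha => hzero i a b ha) (by simp)]
    have l2 : P b * K i = P b * K i * P b := by
      calc P b * K i = (P b * K i) * 1 := (mul_one _).symm
        _ = ∑ a, P b * K i * P a := by rw [← hPsum, Finset.mul_sum]
        _ = P b * K i * P b := by
            rw [Finset.sum_eq_single b (fun a _ ha => hzero i b a (Ne.symm ha)) (by simp)]
    rw [l1, ← l2]
  -- conclude
  have hcomm : ∀ i, K i * ρ = ρ * K i := by
    intro i
    rw [hρ, Finset.mul_sum, Finset.sum_mul]
    exact Finset.sum_congr rfl fun m _ => by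
      rw [mul_smul_comm, smul_mul_assoc, commP]
  rw [hK ρ]
  calc ∑ i, K i * ρ * (K i)ᴴ = ∑ i, ρ * (K i * (K i)ᴴ) := by
        refine Finset.sum_congr rfl fun i _ => ?_
        rw [hcomm i, mul_assoc]
    _ = ρ := by rw [← Finset.mul_sum, hK1, mul_one]
end
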